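/- Let U ⊆ ℍ be open, f₀, f₁ : ℝ⁴ → ℝ be C¹, f : U → ℍ be given by f(x) = f₁(x₁,x₂,x₃,x₄)e₁ + ∑ᵢ₌₂⁴ xᵢ f₀(x₁,x₂,x₃,x₄)eᵢ, and c = ∑ₖcₖeₖ ∈ U. If there exists L ∈ ℍ such that { f(c+Δq) − f(c) + ∑ᵢ₌₂⁴ [ f→ᶜᵢ(c + (Δq)ᵢ·(e₁+e₂+e₃+e₄)) − f→ᶜᵢ(c) ] }·(Δq)⁻¹ tends to L as Δq → 0 along the punctured neighborhood filter 𝓝[≠] 0 in ℍ (where (Δq)ᵢ denotes the i-th real coordinate of Δq), then f is algebraic regular at c and L = ∂f/∂x₁(c). -/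

import Mathlib

open scoped Quaternion

noncomputable section

/-- The standard basis `e₁ = 1, e₂ = i, e₃ = j, e₄ = k` of the quaternions. -/
def e : Fin 4 → ℍ[ℝ] := ![1, ⟨0,1,0,0⟩, ⟨0,0,1,0⟩, ⟨0,0,0,1⟩]

/-- The real coordinates of a quaternion. -/
def toTuple (x : ℍ[ℝ]) : Fin 4 → ℝ := ![x.re, x.imI, x.imJ, x.imK]
/-- The `i`-th partial derivative of a function `g : ℝ⁴ → ℝ`. -/
def pd (g : (Fin 4 → ℝ) → ℝ) (i : Fin 4) (p : Fin 4 → ℝ) : ℝ :=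
  fderiv ℝ g p (Pi.single i 1)

/-- `f` is given on `U` by `f(x) = f₁(x₁,x₂,x₃,x₄)e₁ + ∑ₖ₌₂⁴ xₖ f₀(x₁,x₂,x₃,x₄)eₖ`. -/
def Represents (f : ℍ[ℝ] → ℍ[ℝ]) (U : Set ℍ[ℝ]) (f₀ f₁ : (Fin 4 → ℝ) → ℝ) : Prop :=
  ∀ x ∈ U, f x = f₁ (toTuple x) • e 0 + (x.imI * f₀ (toTuple x)) • e 1 +
    (x.imJ * f₀ (toTuple x)) • e 2 + (x.imK * f₀ (toTuple x)) • e 3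

/-- The generalized Cauchy–Riemann equations (ii) of algebraic regularity, at `p ∈ ℝ⁴`. -/
def RegularEqs (f₀ f₁ : (Fin 4 → ℝ) → ℝ) (p : Fin 4 → ℝ) : Prop :=
  pd f₁ 0 p = f₀ p + p 1 * pd f₀ 1 p + p 2 * pd f₀ 2 p + p 3 * pd f₀ 3 p ∧
  (∀ i : Fin 4, i ≠ 0 → pd f₁ i p = -(p i * pd f₀ 0 p)) ∧
  (∀ i j : Fin 4, i ≠ 0 → j ≠ 0 → i ≠ j → p i * pd f₀ j p = p j * pd f₀ i p)

/-- `f` is algebraic regular at `c ∈ U`. -/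
def AlgebraicRegularAt (f : ℍ[ℝ] → ℍ[ℝ]) (U : Set ℍ[ℝ]) (c : ℍ[ℝ]) : Prop :=
  ∃ f₀ f₁ : (Fin 4 → ℝ) → ℝ, ContDiff ℝ 1 f₀ ∧ ContDiff ℝ 1 f₁ ∧
    Represents f U f₀ f₁ ∧ RegularEqs f₀ f₁ (toTuple c)

/-- `f` is algebraic regular on `U`. -/
def AlgebraicRegularOn (f : ℍ[ℝ] → ℍ[ℝ]) (U : Set ℍ[ℝ]) : Prop :=
  ∀ c ∈ U, AlgebraicRegularAt f U c
/-- The function `f→ᶜ₄` (case `i = 2, j = 3` of (114)). -/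
def frFour (f₀ : (Fin 4 → ℝ) → ℝ) (c : ℍ[ℝ]) (x : ℍ[ℝ]) : ℍ[ℝ] :=
  (c.imI * f₀ ![c.re, x.imI, c.imJ, c.imK] + c.imJ * f₀ ![c.re, c.imI, x.imJ, c.imK]) • e 3 +
  ((-1 : ℝ) ^ (2 + 3) * c.imI * f₀ ![x.re, c.imI, c.imJ, c.imK] -
    c.imK * f₀ ![c.re, c.imI, x.imJ, c.imK]) • e 2 -
  ((-1 : ℝ) ^ (2 + 3) * c.imJ * f₀ ![x.re, c.imI, c.imJ, c.imK] +
    c.imK * f₀ ![c.re, x.imI, c.imJ, c.imK]) • e 1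

/-- The function `f→ᶜ₃` (case `i = 2, j = 4` of (114)). -/
def frThree (f₀ : (Fin 4 → ℝ) → ℝ) (c : ℍ[ℝ]) (x : ℍ[ℝ]) : ℍ[ℝ] :=
  (c.imI * f₀ ![c.re, x.imI, c.imJ, c.imK] + c.imK * f₀ ![c.re, c.imI, c.imJ, x.imK]) • e 2 +
  ((-1 : ℝ) ^ (2 + 4) * c.imI * f₀ ![x.re, c.imI, c.imJ, c.imK] -
    c.imJ * f₀ ![c.re, c.imI, c.imJ, x.imK]) • e 3 -
  ((-1 : ℝ) ^ (2 + 4) * c.imK * f₀ ![x.re, c.imI, c.imJ, c.imK] +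
    c.imJ * f₀ ![c.re, x.imI, c.imJ, c.imK]) • e 1

/-- The function `f→ᶜ₂` (case `i = 3, j = 4` of (114)). -/
def frTwo (f₀ : (Fin 4 → ℝ) → ℝ) (c : ℍ[ℝ]) (x : ℍ[ℝ]) : ℍ[ℝ] :=
  (c.imJ * f₀ ![c.re, c.imI, x.imJ, c.imK] + c.imK * f₀ ![c.re, c.imI, c.imJ, x.imK]) • e 1 +
  ((-1 : ℝ) ^ (3 + 4) * c.imJ * f₀ ![x.re, c.imI, c.imJ, c.imK] -
    c.imI * f₀ ![c.re, c.imI, c.imJ, x.imK]) • e 3 -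
  ((-1 : ℝ) ^ (3 + 4) * c.imK * f₀ ![x.re, c.imI, c.imJ, c.imK] +
    c.imI * f₀ ![c.re, c.imI, x.imJ, c.imK]) • e 2

/-- The right difference quotient of Proposition 4.1 (iii). -/
def rightQuot (f : ℍ[ℝ] → ℍ[ℝ]) (f₀ : (Fin 4 → ℝ) → ℝ) (c : ℍ[ℝ]) (Δq : ℍ[ℝ]) : ℍ[ℝ] :=
  (f (c + Δq) - f c +
      (frTwo f₀ c (c + Δq.imI • (e 0 + e 1 + e 2 + e 3)) - frTwo f₀ c c) +
      (frThree f₀ c (c + Δq.imJ • (e 0 + e 1 + e 2 + e 3)) - frThree f₀ c c) +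
      (frFour f₀ c (c + Δq.imK • (e 0 + e 1 + e 2 + e 3)) - frFour f₀ c c)) *
    (Δq)⁻¹

namespace AuxAR10

open Filter

lemma line_deriv {g : (Fin 4 → ℝ) → ℝ} (hg : ContDiff ℝ 1 g) (p v : Fin 4 → ℝ) :
    HasDerivAt (fun t : ℝ => g (p + t • v)) (fderiv ℝ g p v) 0 := by
  have h1 : HasFDerivAt g (fderiv ℝ g p) (p + (0:ℝ) • v) := by
    simpa using (hg.differentiable one_ne_zero p).hasFDerivAt
  have h2 : HasDerivAt (fun t : ℝ => p + t • v) v 0 := by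
    simpa using ((hasDerivAt_id (0:ℝ)).smul_const v).const_add p
  exact h1.comp_hasDerivAt 0 h2

lemma smul_inv_q (t : ℝ) (u : ℍ[ℝ]) : (t • u)⁻¹ = t⁻¹ • u⁻¹ := by
  rcases eq_or_ne t 0 with h | h; · simp [h]
  rcases eq_or_ne u 0 with h' | h'; · simp [h']
  refine inv_eq_of_mul_eq_one_left ?_
  rw [smul_mul_smul_comm]
  simp [inv_mul_cancel₀ h, inv_mul_cancel₀ h']

lemma tendsto_quot {g : ℝ → ℍ[ℝ]} {D : ℍ[ℝ]} (hg : HasDerivAt g D 0) (u : ℍ[ℝ]) :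
    Tendsto (fun t : ℝ => (g t - g 0) * (t • u)⁻¹) (nhdsWithin 0 {t | t ≠ 0})
      (nhds (D * u⁻¹)) := by
  have h2 : Tendsto (fun t : ℝ => t⁻¹ • (g t - g 0)) (nhdsWithin 0 {t | t ≠ 0}) (nhds D) := by
    have h := hasDerivAt_iff_tendsto_slope.mp hg
    have hfun : slope g 0 = fun t : ℝ => t⁻¹ • (g t - g 0) := by
      funext t; rw [slope_def_module, sub_zero]
    rw [show {t:ℝ|t≠0} = ({(0:ℝ)}ᶜ:Set ℝ) from rfl, ← hfun]; exact h
  refine (h2.mul (tendsto_const_nhds (x := u⁻¹))).congr fun t => ?_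
  rw [smul_inv_q, mul_smul_comm, smul_mul_assoc]

@[simp] lemma e0re : (e 0).re = 1 := rfl
@[simp] lemma e0i : (e 0).imI = 0 := rfl
@[simp] lemma e0j : (e 0).imJ = 0 := rfl
@[simp] lemma e0k : (e 0).imK = 0 := rfl
@[simp] lemma e1re : (e 1).re = 0 := rfl
@[simp] lemma e1i : (e 1).imI = 1 := rfl
@[simp] lemma e1j : (e 1).imJ = 0 := rfl
@[simp] lemma e1k : (e 1).imK = 0 := rfl
@[simp] lemma e2re : (e 2).re = 0 := rfl
@[simp] lemma e2i : (e 2).imI = 0 := rfl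
@[simp] lemma e2j : (e 2).imJ = 1 := rfl
@[simp] lemma e2k : (e 2).imK = 0 := rfl
@[simp] lemma e3re : (e 3).re = 0 := rfl
@[simp] lemma e3i : (e 3).imI = 0 := rfl
@[simp] lemma e3j : (e 3).imJ = 0 := rfl
@[simp] lemma e3k : (e 3).imK = 1 := rfl

lemma e_ne (k : Fin 4) : e k ≠ 0 := by
  fin_cases k <;> rw [Ne, Quaternion.ext_iff] <;> simp

lemma map_lemma (k : Fin 4) :
    Tendsto (fun t : ℝ => t • e k) (nhdsWithin 0 {t | t ≠ 0})
      (nhdsWithin 0 {q : ℍ[ℝ] | q ≠ 0}) := by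
  rw [tendsto_nhdsWithin_iff]
  constructor
  · have hcont : Continuous (fun t : ℝ => t • e k) := continuous_id.smul continuous_const
    simpa using (hcont.tendsto 0).mono_left nhdsWithin_le_nhds
  · filter_upwards [self_mem_nhdsWithin] with t ht
    exact smul_ne_zero ht (e_ne k)

/-- coordinate single vector -/
def sgl (k : Fin 4) : Fin 4 → ℝ := Pi.single k 1

/-- the point `p` moved by `t` in the `k`-th coordinate -/
def qpt (p : Fin 4 → ℝ) (k : Fin 4) (t : ℝ) : Fin 4 → ℝ := p + t • sgl k

/-- the representing formula as a function of the coordinates -/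
def base (f₀ f₁ : (Fin 4 → ℝ) → ℝ) (x : Fin 4 → ℝ) : ℍ[ℝ] :=
  f₁ x • e 0 + (x 1 * f₀ x) • e 1 + (x 2 * f₀ x) • e 2 + (x 3 * f₀ x) • e 3

lemma qpt_zero (p : Fin 4 → ℝ) (k : Fin 4) : qpt p k 0 = p := by
  funext j; simp [qpt]

lemma toTuple_add (c : ℍ[ℝ]) (t : ℝ) (k : Fin 4) :
    toTuple (c + t • e k) = qpt (toTuple c) k t := by
  funext j; fin_cases k <;> fin_cases j <;> simp [toTuple, qpt, sgl, Pi.single_apply, Quaternion.re_smul]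

lemma mx0 (c : ℍ[ℝ]) (t : ℝ) :
    ![(c + t • (e 0 + e 1 + e 2 + e 3)).re, c.imI, c.imJ, c.imK] = qpt (toTuple c) 0 t := by
  funext j; fin_cases j <;> simp [toTuple, qpt, sgl, Pi.single_apply, Quaternion.re_smul]

lemma mx1 (c : ℍ[ℝ]) (t : ℝ) :
    ![c.re, (c + t • (e 0 + e 1 + e 2 + e 3)).imI, c.imJ, c.imK] = qpt (toTuple c) 1 t := by
  funext j; fin_cases j <;> simp [toTuple, qpt, sgl, Pi.single_apply, Quaternion.re_smul]

lemma mx2 (c : ℍ[ℝ]) (t : ℝ) :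
    ![c.re, c.imI, (c + t • (e 0 + e 1 + e 2 + e 3)).imJ, c.imK] = qpt (toTuple c) 2 t := by
  funext j; fin_cases j <;> simp [toTuple, qpt, sgl, Pi.single_apply, Quaternion.re_smul]

lemma mx3 (c : ℍ[ℝ]) (t : ℝ) :
    ![c.re, c.imI, c.imJ, (c + t • (e 0 + e 1 + e 2 + e 3)).imK] = qpt (toTuple c) 3 t := by
  funext j; fin_cases j <;> simp [toTuple, qpt, sgl, Pi.single_apply, Quaternion.re_smul]

/-- coordinate version of `frTwo` along the diagonal -/
def fr2c (f₀ : (Fin 4 → ℝ) → ℝ) (c : ℍ[ℝ]) (t : ℝ) : ℍ[ℝ] :=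
  (c.imJ * f₀ (qpt (toTuple c) 2 t) + c.imK * f₀ (qpt (toTuple c) 3 t)) • e 1 +
  ((-1 : ℝ) ^ (3 + 4) * c.imJ * f₀ (qpt (toTuple c) 0 t) -
    c.imI * f₀ (qpt (toTuple c) 3 t)) • e 3 -
  ((-1 : ℝ) ^ (3 + 4) * c.imK * f₀ (qpt (toTuple c) 0 t) +
    c.imI * f₀ (qpt (toTuple c) 2 t)) • e 2

def fr3c (f₀ : (Fin 4 → ℝ) → ℝ) (c : ℍ[ℝ]) (t : ℝ) : ℍ[ℝ] :=
  (c.imI * f₀ (qpt (toTuple c) 1 t) + c.imK * f₀ (qpt (toTuple c) 3 t)) • e 2 +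
  ((-1 : ℝ) ^ (2 + 4) * c.imI * f₀ (qpt (toTuple c) 0 t) -
    c.imJ * f₀ (qpt (toTuple c) 3 t)) • e 3 -
  ((-1 : ℝ) ^ (2 + 4) * c.imK * f₀ (qpt (toTuple c) 0 t) +
    c.imJ * f₀ (qpt (toTuple c) 1 t)) • e 1

def fr4c (f₀ : (Fin 4 → ℝ) → ℝ) (c : ℍ[ℝ]) (t : ℝ) : ℍ[ℝ] :=
  (c.imI * f₀ (qpt (toTuple c) 1 t) + c.imJ * f₀ (qpt (toTuple c) 2 t)) • e 3 +
  ((-1 : ℝ) ^ (2 + 3) * c.imI * f₀ (qpt (toTuple c) 0 t) -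
    c.imK * f₀ (qpt (toTuple c) 2 t)) • e 2 -
  ((-1 : ℝ) ^ (2 + 3) * c.imJ * f₀ (qpt (toTuple c) 0 t) +
    c.imK * f₀ (qpt (toTuple c) 1 t)) • e 1

lemma fr2c_eq (f₀ : (Fin 4 → ℝ) → ℝ) (c : ℍ[ℝ]) (t : ℝ) :
    frTwo f₀ c (c + t • (e 0 + e 1 + e 2 + e 3)) = fr2c f₀ c t := by
  unfold frTwo fr2c; rw [mx0, mx2, mx3]

lemma fr3c_eq (f₀ : (Fin 4 → ℝ) → ℝ) (c : ℍ[ℝ]) (t : ℝ) :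
    frThree f₀ c (c + t • (e 0 + e 1 + e 2 + e 3)) = fr3c f₀ c t := by
  unfold frThree fr3c; rw [mx0, mx1, mx3]

lemma fr4c_eq (f₀ : (Fin 4 → ℝ) → ℝ) (c : ℍ[ℝ]) (t : ℝ) :
    frFour f₀ c (c + t • (e 0 + e 1 + e 2 + e 3)) = fr4c f₀ c t := by
  unfold frFour fr4c; rw [mx0, mx1, mx2]

lemma fr2c_zero (f₀ : (Fin 4 → ℝ) → ℝ) (c : ℍ[ℝ]) : frTwo f₀ c c = fr2c f₀ c 0 := by
  have := fr2c_eq f₀ c 0; simpa using this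

lemma fr3c_zero (f₀ : (Fin 4 → ℝ) → ℝ) (c : ℍ[ℝ]) : frThree f₀ c c = fr3c f₀ c 0 := by
  have := fr3c_eq f₀ c 0; simpa using this

lemma fr4c_zero (f₀ : (Fin 4 → ℝ) → ℝ) (c : ℍ[ℝ]) : frFour f₀ c c = fr4c f₀ c 0 := by
  have := fr4c_eq f₀ c 0; simpa using this

end AuxAR10

open AuxAR10 Filter

set_option maxHeartbeats 2000000

/-- if the right difference quotient tends to some `L ∈ ℍ` as `Δq → 0`,
then `f` is algebraic regular at `c` and `L = ∂f/∂x₁(c)`. -/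
theorem algebraicRegularAt_of_tendsto_rightQuot (U : Set ℍ[ℝ]) (hU : IsOpen U)
    (f : ℍ[ℝ] → ℍ[ℝ]) (f₀ f₁ : (Fin 4 → ℝ) → ℝ)
    (hf₀ : ContDiff ℝ 1 f₀) (hf₁ : ContDiff ℝ 1 f₁)
    (hf : Represents f U f₀ f₁) (c : ℍ[ℝ]) (hc : c ∈ U) (L : ℍ[ℝ])
    (hL : Filter.Tendsto (rightQuot f f₀ c) (nhdsWithin 0 {q : ℍ[ℝ] | q ≠ 0}) (nhds L)) :
    AlgebraicRegularAt f U c ∧ L = fderiv ℝ f c (e 0) := by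
  haveI hNB : Filter.NeBot (nhdsWithin (0:ℝ) {t : ℝ | t ≠ 0}) := by
    show Filter.NeBot (nhdsWithin (0:ℝ) {(0:ℝ)}ᶜ); infer_instance
  have hbase_eq : ∀ x ∈ U, f x = base f₀ f₁ (toTuple x) := fun x hx => by
    rw [hf x hx]; rfl
  have ha : ∀ k, HasDerivAt (fun t : ℝ => f₀ (qpt (toTuple c) k t))
      (fderiv ℝ f₀ (toTuple c) (sgl k)) 0 := fun k => line_deriv hf₀ _ _
  have hb : ∀ k, HasDerivAt (fun t : ℝ => f₁ (qpt (toTuple c) k t))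
      (fderiv ℝ f₁ (toTuple c) (sgl k)) 0 := fun k => line_deriv hf₁ _ _
  have hco : ∀ k j, HasDerivAt (fun t : ℝ => qpt (toTuple c) k t j) (sgl k j) 0 := by
    intro k j
    have h : HasDerivAt (fun t : ℝ => toTuple c j + t * sgl k j) (sgl k j) 0 := by
      simpa using ((hasDerivAt_id (0:ℝ)).mul_const (sgl k j)).const_add (toTuple c j)
    simpa [qpt] using h
  have hmem : ∀ k : Fin 4, ∀ᶠ t : ℝ in nhds 0, c + t • e k ∈ U := by
    intro k
    have hcont : Continuous fun t : ℝ => c + t • e k :=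
      continuous_const.add (continuous_id.smul continuous_const)
    exact hcont.continuousAt.preimage_mem_nhds (by simpa using hU.mem_nhds hc)
  -- base derivatives along each axis
  have Hb : ∀ k, HasDerivAt (fun t : ℝ => base f₀ f₁ (qpt (toTuple c) k t))
      (fderiv ℝ f₁ (toTuple c) (sgl k) • e 0 +
        (sgl k 1 * f₀ (qpt (toTuple c) k 0) +
          qpt (toTuple c) k 0 1 * fderiv ℝ f₀ (toTuple c) (sgl k)) • e 1 +
        (sgl k 2 * f₀ (qpt (toTuple c) k 0) +
          qpt (toTuple c) k 0 2 * fderiv ℝ f₀ (toTuple c) (sgl k)) • e 2 +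
        (sgl k 3 * f₀ (qpt (toTuple c) k 0) +
          qpt (toTuple c) k 0 3 * fderiv ℝ f₀ (toTuple c) (sgl k)) • e 3) 0 := fun k =>
    ((((hb k).smul_const (e 0)).add (((hco k 1).mul (ha k)).smul_const (e 1))).add
      (((hco k 2).mul (ha k)).smul_const (e 2))).add (((hco k 3).mul (ha k)).smul_const (e 3))
  -- fr derivatives
  have Hfr2 : HasDerivAt (fun t : ℝ => fr2c f₀ c t)
      ((c.imJ * fderiv ℝ f₀ (toTuple c) (sgl 2) + c.imK * fderiv ℝ f₀ (toTuple c) (sgl 3)) • e 1 +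
        ((-1:ℝ) ^ (3+4) * c.imJ * fderiv ℝ f₀ (toTuple c) (sgl 0) -
          c.imI * fderiv ℝ f₀ (toTuple c) (sgl 3)) • e 3 -
        ((-1:ℝ) ^ (3+4) * c.imK * fderiv ℝ f₀ (toTuple c) (sgl 0) +
          c.imI * fderiv ℝ f₀ (toTuple c) (sgl 2)) • e 2) 0 :=
    (((((ha 2).const_mul c.imJ).add ((ha 3).const_mul c.imK)).smul_const (e 1)).add
      ((((ha 0).const_mul ((-1:ℝ)^(3+4) * c.imJ)).sub ((ha 3).const_mul c.imI)).smul_const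
        (e 3))).sub
      ((((ha 0).const_mul ((-1:ℝ)^(3+4) * c.imK)).add ((ha 2).const_mul c.imI)).smul_const (e 2))
  have Hfr3 : HasDerivAt (fun t : ℝ => fr3c f₀ c t)
      ((c.imI * fderiv ℝ f₀ (toTuple c) (sgl 1) + c.imK * fderiv ℝ f₀ (toTuple c) (sgl 3)) • e 2 +
        ((-1:ℝ) ^ (2+4) * c.imI * fderiv ℝ f₀ (toTuple c) (sgl 0) -
          c.imJ * fderiv ℝ f₀ (toTuple c) (sgl 3)) • e 3 -
        ((-1:ℝ) ^ (2+4) * c.imK * fderiv ℝ f₀ (toTuple c) (sgl 0) +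
          c.imJ * fderiv ℝ f₀ (toTuple c) (sgl 1)) • e 1) 0 :=
    (((((ha 1).const_mul c.imI).add ((ha 3).const_mul c.imK)).smul_const (e 2)).add
      ((((ha 0).const_mul ((-1:ℝ)^(2+4) * c.imI)).sub ((ha 3).const_mul c.imJ)).smul_const
        (e 3))).sub
      ((((ha 0).const_mul ((-1:ℝ)^(2+4) * c.imK)).add ((ha 1).const_mul c.imJ)).smul_const (e 1))
  have Hfr4 : HasDerivAt (fun t : ℝ => fr4c f₀ c t)
      ((c.imI * fderiv ℝ f₀ (toTuple c) (sgl 1) + c.imJ * fderiv ℝ f₀ (toTuple c) (sgl 2)) • e 3 +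
        ((-1:ℝ) ^ (2+3) * c.imI * fderiv ℝ f₀ (toTuple c) (sgl 0) -
          c.imK * fderiv ℝ f₀ (toTuple c) (sgl 2)) • e 2 -
        ((-1:ℝ) ^ (2+3) * c.imJ * fderiv ℝ f₀ (toTuple c) (sgl 0) +
          c.imK * fderiv ℝ f₀ (toTuple c) (sgl 1)) • e 1) 0 :=
    (((((ha 1).const_mul c.imI).add ((ha 2).const_mul c.imJ)).smul_const (e 3)).add
      ((((ha 0).const_mul ((-1:ℝ)^(2+3) * c.imI)).sub ((ha 2).const_mul c.imK)).smul_const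
        (e 2))).sub
      ((((ha 0).const_mul ((-1:ℝ)^(2+3) * c.imJ)).add ((ha 1).const_mul c.imK)).smul_const (e 1))
  -- axis 1
  have heq1 : ∀ᶠ t in nhdsWithin (0:ℝ) {t : ℝ | t ≠ 0},
      rightQuot f f₀ c (t • e 1) =
        ((base f₀ f₁ (qpt (toTuple c) 1 t) + fr2c f₀ c t) -
          (base f₀ f₁ (qpt (toTuple c) 1 0) + fr2c f₀ c 0)) * (t • e 1)⁻¹ := by
    filter_upwards [(hmem 1).filter_mono nhdsWithin_le_nhds] with t ht
    have h1 : f (c + t • e 1) = base f₀ f₁ (qpt (toTuple c) 1 t) := by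
      rw [hbase_eq _ ht, toTuple_add]
    have h2 : f c = base f₀ f₁ (qpt (toTuple c) 1 0) := by
      rw [hbase_eq c hc, qpt_zero]
    have h3 : (t • e 1).imI = t := by simp [Quaternion.re_smul]
    have h4 : (t • e 1).imJ = 0 := by simp [Quaternion.re_smul]
    have h5 : (t • e 1).imK = 0 := by simp [Quaternion.re_smul]
    simp only [rightQuot, h3, h4, h5, zero_smul, add_zero, sub_self]
    rw [h1, h2, fr2c_eq, fr2c_zero]
    congr 1
    abel
  have hlim1 : Tendsto (fun t : ℝ =>
      ((base f₀ f₁ (qpt (toTuple c) 1 t) + fr2c f₀ c t) -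
        (base f₀ f₁ (qpt (toTuple c) 1 0) + fr2c f₀ c 0)) * (t • e 1)⁻¹)
      (nhdsWithin (0:ℝ) {t : ℝ | t ≠ 0}) (nhds L) :=
    Filter.Tendsto.congr' heq1 (hL.comp (map_lemma 1))
  have key1 := tendsto_nhds_unique (tendsto_quot ((Hb 1).add Hfr2) (e 1)) hlim1
  have key1' := congrArg (fun z : ℍ[ℝ] => z * e 1) key1
  simp only [mul_assoc, inv_mul_cancel₀ (e_ne 1), mul_one] at key1'
  -- axis 2
  have heq2 : ∀ᶠ t in nhdsWithin (0:ℝ) {t : ℝ | t ≠ 0},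
      rightQuot f f₀ c (t • e 2) =
        ((base f₀ f₁ (qpt (toTuple c) 2 t) + fr3c f₀ c t) -
          (base f₀ f₁ (qpt (toTuple c) 2 0) + fr3c f₀ c 0)) * (t • e 2)⁻¹ := by
    filter_upwards [(hmem 2).filter_mono nhdsWithin_le_nhds] with t ht
    have h1 : f (c + t • e 2) = base f₀ f₁ (qpt (toTuple c) 2 t) := by
      rw [hbase_eq _ ht, toTuple_add]
    have h2 : f c = base f₀ f₁ (qpt (toTuple c) 2 0) := by
      rw [hbase_eq c hc, qpt_zero]
    have h3 : (t • e 2).imI = 0 := by simp [Quaternion.re_smul]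
    have h4 : (t • e 2).imJ = t := by simp [Quaternion.re_smul]
    have h5 : (t • e 2).imK = 0 := by simp [Quaternion.re_smul]
    simp only [rightQuot, h3, h4, h5, zero_smul, add_zero, sub_self]
    rw [h1, h2, fr3c_eq, fr3c_zero]
    congr 1
    abel
  have hlim2 : Tendsto (fun t : ℝ =>
      ((base f₀ f₁ (qpt (toTuple c) 2 t) + fr3c f₀ c t) -
        (base f₀ f₁ (qpt (toTuple c) 2 0) + fr3c f₀ c 0)) * (t • e 2)⁻¹)
      (nhdsWithin (0:ℝ) {t : ℝ | t ≠ 0}) (nhds L) :=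
    Filter.Tendsto.congr' heq2 (hL.comp (map_lemma 2))
  have key2 := tendsto_nhds_unique (tendsto_quot ((Hb 2).add Hfr3) (e 2)) hlim2
  have key2' := congrArg (fun z : ℍ[ℝ] => z * e 2) key2
  simp only [mul_assoc, inv_mul_cancel₀ (e_ne 2), mul_one] at key2'
  -- axis 3
  have heq3 : ∀ᶠ t in nhdsWithin (0:ℝ) {t : ℝ | t ≠ 0},
      rightQuot f f₀ c (t • e 3) =
        ((base f₀ f₁ (qpt (toTuple c) 3 t) + fr4c f₀ c t) -
          (base f₀ f₁ (qpt (toTuple c) 3 0) + fr4c f₀ c 0)) * (t • e 3)⁻¹ := by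
    filter_upwards [(hmem 3).filter_mono nhdsWithin_le_nhds] with t ht
    have h1 : f (c + t • e 3) = base f₀ f₁ (qpt (toTuple c) 3 t) := by
      rw [hbase_eq _ ht, toTuple_add]
    have h2 : f c = base f₀ f₁ (qpt (toTuple c) 3 0) := by
      rw [hbase_eq c hc, qpt_zero]
    have h3 : (t • e 3).imI = 0 := by simp [Quaternion.re_smul]
    have h4 : (t • e 3).imJ = 0 := by simp [Quaternion.re_smul]
    have h5 : (t • e 3).imK = t := by simp [Quaternion.re_smul]
    simp only [rightQuot, h3, h4, h5, zero_smul, add_zero, sub_self]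
    rw [h1, h2, fr4c_eq, fr4c_zero]
    congr 1
    abel
  have hlim3 : Tendsto (fun t : ℝ =>
      ((base f₀ f₁ (qpt (toTuple c) 3 t) + fr4c f₀ c t) -
        (base f₀ f₁ (qpt (toTuple c) 3 0) + fr4c f₀ c 0)) * (t • e 3)⁻¹)
      (nhdsWithin (0:ℝ) {t : ℝ | t ≠ 0}) (nhds L) :=
    Filter.Tendsto.congr' heq3 (hL.comp (map_lemma 3))
  have key3 := tendsto_nhds_unique (tendsto_quot ((Hb 3).add Hfr4) (e 3)) hlim3
  have key3' := congrArg (fun z : ℍ[ℝ] => z * e 3) key3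
  simp only [mul_assoc, inv_mul_cancel₀ (e_ne 3), mul_one] at key3'
  -- axis 0
  have heq0 : ∀ᶠ t in nhdsWithin (0:ℝ) {t : ℝ | t ≠ 0},
      rightQuot f f₀ c (t • e 0) =
        (base f₀ f₁ (qpt (toTuple c) 0 t) - base f₀ f₁ (qpt (toTuple c) 0 0)) * (t • e 0)⁻¹ := by
    filter_upwards [(hmem 0).filter_mono nhdsWithin_le_nhds] with t ht
    have h1 : f (c + t • e 0) = base f₀ f₁ (qpt (toTuple c) 0 t) := by
      rw [hbase_eq _ ht, toTuple_add]
    have h2 : f c = base f₀ f₁ (qpt (toTuple c) 0 0) := by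
      rw [hbase_eq c hc, qpt_zero]
    have h3 : (t • e 0).imI = 0 := by simp [Quaternion.re_smul]
    have h4 : (t • e 0).imJ = 0 := by simp [Quaternion.re_smul]
    have h5 : (t • e 0).imK = 0 := by simp [Quaternion.re_smul]
    simp only [rightQuot, h3, h4, h5, zero_smul, add_zero, sub_self]
    rw [h1, h2]
  have hlim0 : Tendsto (fun t : ℝ =>
      (base f₀ f₁ (qpt (toTuple c) 0 t) - base f₀ f₁ (qpt (toTuple c) 0 0)) * (t • e 0)⁻¹)
      (nhdsWithin (0:ℝ) {t : ℝ | t ≠ 0}) (nhds L) :=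
    Filter.Tendsto.congr' heq0 (hL.comp (map_lemma 0))
  have key0 := tendsto_nhds_unique (tendsto_quot (Hb 0) (e 0)) hlim0
  have key0' : (fderiv ℝ f₁ (toTuple c) (sgl 0) • e 0 +
        (sgl 0 1 * f₀ (qpt (toTuple c) 0 0) +
          qpt (toTuple c) 0 0 1 * fderiv ℝ f₀ (toTuple c) (sgl 0)) • e 1 +
        (sgl 0 2 * f₀ (qpt (toTuple c) 0 0) +
          qpt (toTuple c) 0 0 2 * fderiv ℝ f₀ (toTuple c) (sgl 0)) • e 2 +
        (sgl 0 3 * f₀ (qpt (toTuple c) 0 0) +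
          qpt (toTuple c) 0 0 3 * fderiv ℝ f₀ (toTuple c) (sgl 0)) • e 3) = L := by
    simpa [show e 0 = 1 from rfl] using key0
  rw [← key0'] at key1' key2' key3'
  have A1r := congrArg QuaternionAlgebra.re key1'
  have A1i := congrArg QuaternionAlgebra.imI key1'
  have A1j := congrArg QuaternionAlgebra.imJ key1'
  have A1k := congrArg QuaternionAlgebra.imK key1'
  have A2r := congrArg QuaternionAlgebra.re key2'
  have A2i := congrArg QuaternionAlgebra.imI key2'
  have A2j := congrArg QuaternionAlgebra.imJ key2'
  have A2k := congrArg QuaternionAlgebra.imK key2'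
  have A3r := congrArg QuaternionAlgebra.re key3'
  have A3i := congrArg QuaternionAlgebra.imI key3'
  have A3j := congrArg QuaternionAlgebra.imJ key3'
  have A3k := congrArg QuaternionAlgebra.imK key3'
  norm_num [toTuple, qpt_zero, sgl, Pi.single_apply, Quaternion.re_mul,
    Quaternion.imI_mul, Quaternion.imJ_mul, Quaternion.imK_mul, Quaternion.re_smul, Fin.reduceEq]
    at A1r A1i A1j A1k A2r A2i A2j A2k A3r A3i A3j A3k
  simp only [Fin.reduceEq, reduceIte, add_zero, neg_zero, zero_add, sub_zero, neg_neg,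
    Fin.isValue, Matrix.cons_val]
    at A1r A1i A1j A1k A2r A2i A2j A2k A3r A3i A3j A3k
  constructor
  · refine ⟨f₀, f₁, hf₀, hf₁, hf, ?_, ?_, ?_⟩
    · simp [pd, toTuple]
      linarith [A2j]
    · intro i hi
      fin_cases i
      · exact absurd rfl hi
      · simp [pd, toTuple]
        linarith [A1r]
      · simp [pd, toTuple]
        linarith [A2r]
      · simp [pd, toTuple]
        linarith [A3r]
    · intro i j hi hj hij
      fin_cases i <;> fin_cases j <;>
        first
          | exact absurd rfl hi
          | exact absurd rfl hj
          | exact absurd rfl hij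
          | (simp [pd, toTuple]
             linarith [A1i, A1j, A1k, A2i, A2k, A3i, A3j])
  · -- L = fderiv f c (e 0)
    have htt : Differentiable ℝ toTuple := by
      let Lm : ℍ[ℝ] →ₗ[ℝ] (Fin 4 → ℝ) :=
        { toFun := toTuple
          map_add' := by intro x y; funext j; fin_cases j <;> simp [toTuple]
          map_smul' := by intro r x; funext j; fin_cases j <;> simp [toTuple] }
      have h : toTuple = ⇑(LinearMap.toContinuousLinearMap Lm) := rfl
      rw [h]
      exact (LinearMap.toContinuousLinearMap Lm).differentiable
    have h0 : Differentiable ℝ (fun x : ℍ[ℝ] => f₀ (toTuple x)) := (hf₀.differentiable one_ne_zero).comp htt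
    have h1 : Differentiable ℝ (fun x : ℍ[ℝ] => f₁ (toTuple x)) := (hf₁.differentiable one_ne_zero).comp htt
    have hcoors : ∀ j, Differentiable ℝ (fun x : ℍ[ℝ] => toTuple x j) := fun j =>
      differentiable_pi.mp htt j
    have hF : Differentiable ℝ (fun x : ℍ[ℝ] => base f₀ f₁ (toTuple x)) :=
      (((h1.smul_const (e 0)).add (((hcoors 1).mul h0).smul_const (e 1))).add
        (((hcoors 2).mul h0).smul_const (e 2))).add (((hcoors 3).mul h0).smul_const (e 3))
    have hfeq : f =ᶠ[nhds c] fun x : ℍ[ℝ] => base f₀ f₁ (toTuple x) := by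
      filter_upwards [hU.mem_nhds hc] with x hx; exact hbase_eq x hx
    have hfd : HasFDerivAt f (fderiv ℝ (fun x : ℍ[ℝ] => base f₀ f₁ (toTuple x)) c) c :=
      ((hF c).hasFDerivAt).congr_of_eventuallyEq hfeq
    have hl2 : HasDerivAt (fun t : ℝ => c + t • e 0) (e 0) 0 := by
      simpa using ((hasDerivAt_id (0:ℝ)).smul_const (e 0)).const_add c
    have hfd' : HasFDerivAt f (fderiv ℝ (fun x : ℍ[ℝ] => base f₀ f₁ (toTuple x)) c)
        (c + (0:ℝ) • e 0) := by simpa using hfd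
    have hline := hfd'.comp_hasDerivAt 0 hl2
    have hev : (fun t : ℝ => f (c + t • e 0)) =ᶠ[nhds (0:ℝ)]
        (fun t : ℝ => base f₀ f₁ (qpt (toTuple c) 0 t)) := by
      filter_upwards [hmem 0] with t ht; rw [hbase_eq _ ht, toTuple_add]
    have hline2 := (Hb 0).congr_of_eventuallyEq hev
    have huniq := hline2.unique hline
    rw [hfd.fderiv, ← key0']
    exact huniq
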